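/- Let a_1,…,a_t be positive integers and define m(a) to be the largest number l such that some l of the a_i have a common divisor greater than 1 (and m(a) = 1 if the a_i are pairwise coprime but not all 1). For 0 ≤ k ≤ t−2, let d_k = gcd of all products of k distinct entries (d_0 = 1). Then max{ i : d_i = 1, 0 ≤ i ≤ t−2 } = t − m(a), provided m(a) ≥ 2. -/

import Mathlib

theorem stmt_4 (t m : ℕ) (a : Fin t → ℕ) (ha : ∀ i, 0 < a i)
    (hm2 : 2 ≤ m)
    (hm_wit : ∃ s : Finset (Fin t), s.card = m ∧ 1 < s.gcd a)
    (hm_max : ∀ s : Finset (Fin t), 1 < s.gcd a → s.card ≤ m)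
    (d : ℕ → ℕ)
    (hd : ∀ k, d k = ((Finset.univ : Finset (Fin t)).powersetCard k).gcd
      (fun s => ∏ i ∈ s, a i)) :
    d (t - m) = 1 ∧ ∀ i, t - m < i → i ≤ t - 2 → d i ≠ 1 := by
  obtain ⟨S, hScard, hSgcd⟩ := hm_wit
  have hmt : m ≤ t := by
    calc m = S.card := hScard.symm
    _ ≤ (Finset.univ : Finset (Fin t)).card := Finset.card_le_card (Finset.subset_univ S)
    _ = t := by simp
  constructor
  · -- d (t - m) = 1
    by_contra hne
    -- d (t-m) ≠ 0 since some product is positive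
    have hdvd_all : ∀ s ∈ (Finset.univ : Finset (Fin t)).powersetCard (t - m),
        d (t - m) ∣ ∏ i ∈ s, a i := by
      intro s hs
      rw [hd]
      exact Finset.gcd_dvd hs
    set p := (d (t - m)).minFac with hp
    have hd0 : d (t - m) ≠ 0 := by
      intro h0
      -- a subset of card t - m exists
      obtain ⟨s, hsub, hscard⟩ := Finset.exists_subset_card_eq
        (s := (Finset.univ : Finset (Fin t))) (n := t - m) (by simp)
      have := hdvd_all s (Finset.mem_powersetCard.2 ⟨hsub, hscard⟩)
      rw [h0] at this
      have : ∏ i ∈ s, a i = 0 := Nat.eq_zero_of_zero_dvd this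
      have : ∃ i ∈ s, a i = 0 := Finset.prod_eq_zero_iff.1 this
      obtain ⟨i, _, hi⟩ := this
      exact absurd hi (ha i).ne'
    have hpp : p.Prime := Nat.minFac_prime hne
    have hpd : p ∣ d (t - m) := Nat.minFac_dvd _
    -- T = set of indices divisible by p
    set T : Finset (Fin t) := Finset.univ.filter (fun i => p ∣ a i) with hT
    -- complement of T has card < t - m
    have hTc : Tᶜ.card < t - m := by
      by_contra hc
      push_neg at hc
      obtain ⟨s, hsub, hscard⟩ := Finset.exists_subset_card_eq (s := Tᶜ) (n := t - m) hc
      have hs : s ∈ (Finset.univ : Finset (Fin t)).powersetCard (t - m) :=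
        Finset.mem_powersetCard.2 ⟨Finset.subset_univ s, hscard⟩
      have hpdvd : p ∣ ∏ i ∈ s, a i := hpd.trans (hdvd_all s hs)
      obtain ⟨i, his, hpi⟩ := (Prime.dvd_finset_prod_iff hpp.prime a).1 hpdvd
      have : i ∈ Tᶜ := hsub his
      rw [Finset.mem_compl, hT, Finset.mem_filter] at this
      exact this ⟨Finset.mem_univ i, hpi⟩
    have hTcard : m < T.card := by
      have hcompl := Finset.card_compl T
      have hfin : Fintype.card (Fin t) = t := Fintype.card_fin t
      omega
    have hTgcd : 1 < T.gcd a := by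
      have hdvd : p ∣ T.gcd a := by
        apply Finset.dvd_gcd
        intro i hi
        rw [hT, Finset.mem_filter] at hi
        exact hi.2
      have hne0 : T.gcd a ≠ 0 := by
        intro h0
        obtain ⟨i, hi⟩ := Finset.card_pos.1 (by omega : 0 < T.card)
        exact (ha i).ne' (Finset.gcd_eq_zero_iff.1 h0 i hi)
      have := Nat.le_of_dvd (Nat.pos_of_ne_zero hne0) hdvd
      have := hpp.two_le
      omega
    have := hm_max T hTgcd
    omega
  · -- d i ≠ 1 for t - m < i
    intro i hi _ hdi
    have hgdvd : S.gcd a ∣ d i := by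
      rw [hd]
      apply Finset.dvd_gcd
      intro s hs
      rw [Finset.mem_powersetCard] at hs
      -- s and S intersect
      have hinter : (s ∩ S).Nonempty := by
        rw [← Finset.card_pos]
        have := Finset.card_union_le s S
        have hub : (s ∪ S).card ≤ t := by
          calc (s ∪ S).card ≤ (Finset.univ : Finset (Fin t)).card :=
            Finset.card_le_card (Finset.subset_univ _)
          _ = t := by simp
        have := Finset.card_inter_add_card_union s S
        omega
      obtain ⟨j, hj⟩ := hinter
      rw [Finset.mem_inter] at hj
      exact (Finset.gcd_dvd hj.2).trans (Finset.dvd_prod_of_mem a hj.1)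
    rw [hdi, Nat.dvd_one] at hgdvd
    omega
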